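/- Let N be the maximal operator associated to the basis 𝓑₀ = {(0,b) : b > 0} on ℝ, namely Nf(t) = sup_{b>t} b^{−1}∫_0^b |f(x)| dx for t > 0 (and Nf(t) = 0 for t ≤ 0). Let 1 < p₀ < ∞ and β ≥ 0, and suppose there is a constant c > 0 such that for every weight w on ℝ with [w]_{A_{p₀,𝓑₀}} < ∞ and every f with ‖f‖_{L^{p₀}(w)} < ∞, ‖Nf‖_{L^{p₀}(w)} ≤ c [w]_{A_{p₀,𝓑₀}}^β ‖f‖_{L^{p₀}(w)}. Then β ≥ 1/(p₀−1); i.e., the exponent 1/(p−1) in the weighted bound for N over Calderón weights is sharp. -/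

import Mathlib

open MeasureTheory Filter
open scoped ENNReal NNReal

/-- The maximal operator `N` associated to the basis `𝓑₀ = {(0,b) : b > 0}` on ℝ:
`Nf(t) = sup_{b > t} b⁻¹ ∫_0^b |f|` for `t > 0`, and `Nf(t) = 0` for `t ≤ 0`. -/
noncomputable def Nop (f : ℝ → ℝ) : ℝ → ℝ≥0∞ :=
  fun t => ⨆ (b : ℝ) (_ : t < b) (_ : 0 < t),
    (ENNReal.ofReal b)⁻¹ * ∫⁻ x in Set.Ioo 0 b, (‖f x‖₊ : ℝ≥0∞)

/-- The `A_{p,𝓑₀}` constant of a weight on ℝ for the Calderón basis `𝓑₀`. -/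
noncomputable def calderonApConst (p : ℝ) (w : ℝ → ℝ≥0∞) : ℝ≥0∞ :=
  ⨆ (b : ℝ) (_ : 0 < b),
    ((ENNReal.ofReal b)⁻¹ * ∫⁻ x in Set.Ioo 0 b, w x) *
      ((ENNReal.ofReal b)⁻¹ * ∫⁻ x in Set.Ioo 0 b, w x ^ (1 - p / (p - 1))) ^ (p - 1)

/-- A weight on ℝ: measurable, nonnegative (`ℝ≥0∞`-valued) and locally integrable. -/
def IsWeightR (w : ℝ → ℝ≥0∞) : Prop :=
  Measurable w ∧ ∀ r : ℝ, 0 < r → (∫⁻ x in Set.Ioo (-r) r, w x) < ∞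

/-- Weighted L^p norm on ℝ of an `ℝ≥0∞`-valued function. -/
noncomputable def wLpNormER (p : ℝ) (w : ℝ → ℝ≥0∞) (g : ℝ → ℝ≥0∞) : ℝ≥0∞ :=
  (∫⁻ x, g x ^ p * w x) ^ (1 / p)

/-- Weighted L^p norm on ℝ of a real function. -/
noncomputable def wLpNormR (p : ℝ) (w : ℝ → ℝ≥0∞) (f : ℝ → ℝ) : ℝ≥0∞ :=
  wLpNormER p w fun x => (‖f x‖₊ : ℝ≥0∞)


noncomputable section Aux18

open Set

/-- power weight, zero on the negative axis -/
def wgt (α : ℝ) : ℝ → ℝ≥0∞ := fun x => if 0 < x then ENNReal.ofReal (x ^ α) else 0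

/-- test function -/
def fn (δ : ℝ) : ℝ → ℝ := fun x => if x ∈ Set.Ioo (0:ℝ) 1 then x ^ (δ - 1) else 0

lemma lint_rpow {s b : ℝ} (hs : -1 < s) (hb : 0 < b) :
    ∫⁻ x in Set.Ioo (0:ℝ) b, ENNReal.ofReal (x ^ s) = ENNReal.ofReal (b ^ (s+1) / (s+1)) := by
  rw [restrict_Ioo_eq_restrict_Ioc]
  rw [← ofReal_integral_eq_lintegral_ofReal]
  · rw [← intervalIntegral.integral_of_le hb.le, integral_rpow (Or.inl hs),
      Real.zero_rpow (by linarith), sub_zero]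
  · exact (intervalIntegral.intervalIntegrable_rpow' (a := 0) (b := b) hs).1
  · filter_upwards [ae_restrict_mem measurableSet_Ioc] with x hx
    exact Real.rpow_nonneg hx.1.le s

variable {p δ : ℝ} (hp : 1 < p) (hδ0 : 0 < δ) (hδ1 : δ < 1)

section
include hp hδ0 hδ1

lemma wgt_int {b : ℝ} (hb : 0 < b) :
    ∫⁻ x in Set.Ioo (0:ℝ) b, wgt ((1-δ)*(p-1)) x
      = ENNReal.ofReal (b ^ ((1-δ)*(p-1)+1) / ((1-δ)*(p-1)+1)) := by
  have h1 : ∫⁻ x in Set.Ioo (0:ℝ) b, wgt ((1-δ)*(p-1)) x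
      = ∫⁻ x in Set.Ioo (0:ℝ) b, ENNReal.ofReal (x ^ ((1-δ)*(p-1))) :=
    setLIntegral_congr_fun measurableSet_Ioo (fun x hx => if_pos hx.1)
  rw [h1]
  exact lint_rpow (by nlinarith) hb

lemma sigma_int {b : ℝ} (hb : 0 < b) :
    ∫⁻ x in Set.Ioo (0:ℝ) b, wgt ((1-δ)*(p-1)) x ^ (1 - p/(p-1))
      = ENNReal.ofReal (b ^ δ / δ) := by
  have hexp : ((1-δ)*(p-1)) * (1 - p/(p-1)) = δ - 1 := by
    have hp1 : p - 1 ≠ 0 := by linarith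
    field_simp
    ring
  have hcong : ∀ x ∈ Set.Ioo (0:ℝ) b,
      wgt ((1-δ)*(p-1)) x ^ (1 - p/(p-1)) = ENNReal.ofReal (x ^ (δ - 1)) := by
    intro x hx
    have hx0 : 0 < x := hx.1
    have hxα : 0 < x ^ ((1-δ)*(p-1)) := Real.rpow_pos_of_pos hx0 _
    rw [wgt]
    simp only [if_pos hx0]
    rw [ENNReal.ofReal_rpow_of_pos hxα, ← Real.rpow_mul hx0.le, hexp]
  rw [setLIntegral_congr_fun measurableSet_Ioo hcong]
  have := lint_rpow (s := δ - 1) (b := b) (by linarith) hb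
  simpa using this

lemma ap_le : calderonApConst p (wgt ((1-δ)*(p-1))) ≤ ENNReal.ofReal (δ ^ (1 - p)) := by
  set α := (1-δ)*(p-1) with hα
  have hα0 : 0 < α := by rw [hα]; nlinarith
  rw [calderonApConst]
  refine iSup_le fun b => iSup_le fun hb => ?_
  rw [wgt_int hp hδ0 hδ1 hb, sigma_int hp hδ0 hδ1 hb,
    ← ENNReal.ofReal_inv_of_pos hb, ← ENNReal.ofReal_mul (by positivity),
    ← ENNReal.ofReal_mul (by positivity),
    ENNReal.ofReal_rpow_of_pos (by positivity), ← ENNReal.ofReal_mul (by positivity)]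
  apply ENNReal.ofReal_le_ofReal
  have h1 : b⁻¹ * (b ^ (α+1) / (α+1)) = b ^ α / (α+1) := by
    rw [Real.rpow_add hb, Real.rpow_one]
    field_simp
  have h2 : b⁻¹ * (b ^ δ / δ) = b ^ (δ-1) / δ := by
    rw [show δ = (δ-1)+1 by ring, Real.rpow_add hb, Real.rpow_one]
    field_simp
    rw [show δ - 1 + 1 - 1 = δ - 1 by ring]
  rw [h1, h2, Real.div_rpow (Real.rpow_nonneg hb.le _) hδ0.le,
    ← Real.rpow_mul hb.le, div_mul_div_comm, ← Real.rpow_add hb,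
    show α + (δ - 1) * (p - 1) = 0 by rw [hα]; ring, Real.rpow_zero,
    show (1:ℝ) - p = -(p-1) by ring, Real.rpow_neg hδ0.le, inv_eq_one_div]
  have hx : 0 < δ ^ (p-1) := Real.rpow_pos_of_pos hδ0 _
  gcongr
  nlinarith

lemma fn_norm : ∫⁻ x, (‖fn δ x‖₊ : ℝ≥0∞) ^ p * wgt ((1-δ)*(p-1)) x = ENNReal.ofReal (1/δ) := by
  have hcong : ∀ x, (‖fn δ x‖₊ : ℝ≥0∞) ^ p * wgt ((1-δ)*(p-1)) x
      = Set.indicator (Set.Ioo (0:ℝ) 1) (fun x => ENNReal.ofReal (x ^ (δ-1))) x := by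
    intro x
    by_cases hx : x ∈ Set.Ioo (0:ℝ) 1
    · rw [Set.indicator_of_mem hx]
      simp only [fn, wgt, if_pos hx, if_pos hx.1]
      rw [← enorm_eq_nnnorm, Real.enorm_eq_ofReal (Real.rpow_nonneg hx.1.le _),
        ENNReal.ofReal_rpow_of_pos (Real.rpow_pos_of_pos hx.1 _),
        ← Real.rpow_mul hx.1.le, ← ENNReal.ofReal_mul (Real.rpow_nonneg hx.1.le _),
        ← Real.rpow_add hx.1]
      congr 2
      ring
    · rw [Set.indicator_of_notMem hx]
      simp only [fn, if_neg hx]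
      simp [ENNReal.zero_rpow_of_pos (by linarith : (0:ℝ) < p)]
  simp_rw [hcong]
  rw [lintegral_indicator measurableSet_Ioo]
  have := lint_rpow (s := δ-1) (b := 1) (by linarith) one_pos
  simpa using this

lemma nop_lb {t : ℝ} (ht : t ∈ Set.Ioo (0:ℝ) (1/2)) :
    ENNReal.ofReal (t ^ (δ-1) / (2*δ)) ≤ Nop (fn δ) t := by
  have ht0 : 0 < t := ht.1
  have h2t : 0 < 2*t := by linarith
  have hint : ∫⁻ x in Set.Ioo (0:ℝ) (2*t), (‖fn δ x‖₊ : ℝ≥0∞)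
      = ENNReal.ofReal ((2*t) ^ δ / δ) := by
    have hcong : ∀ x ∈ Set.Ioo (0:ℝ) (2*t), (‖fn δ x‖₊ : ℝ≥0∞) = ENNReal.ofReal (x ^ (δ-1)) := by
      intro x hx
      have hx1 : x ∈ Set.Ioo (0:ℝ) 1 := ⟨hx.1, by nlinarith [ht.2, hx.2]⟩
      simp only [fn, if_pos hx1]
      exact Real.enorm_eq_ofReal (Real.rpow_nonneg hx.1.le _)
    rw [setLIntegral_congr_fun measurableSet_Ioo hcong]
    have := lint_rpow (s := δ-1) (b := 2*t) (by linarith) h2t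
    simpa using this
  have hterm : ENNReal.ofReal (t ^ (δ-1) / (2*δ)) ≤
      (ENNReal.ofReal (2*t))⁻¹ * ∫⁻ x in Set.Ioo (0:ℝ) (2*t), (‖fn δ x‖₊ : ℝ≥0∞) := by
    rw [hint, ← ENNReal.ofReal_inv_of_pos h2t, ← ENNReal.ofReal_mul (by positivity)]
    apply ENNReal.ofReal_le_ofReal
    have heq : (2*t)⁻¹ * ((2*t) ^ δ / δ) = (2*t) ^ (δ-1) / δ := by
      rw [show δ = (δ-1)+1 by ring, Real.rpow_add h2t, Real.rpow_one]
      field_simp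
      rw [show δ - 1 + 1 - 1 = δ - 1 by ring]
    rw [heq, Real.mul_rpow (by norm_num) ht0.le]
    have h2 : (1/2 : ℝ) ≤ 2 ^ (δ-1) := by
      have := Real.rpow_le_rpow_of_exponent_le (by norm_num : (1:ℝ) ≤ 2)
        (by linarith : (-1:ℝ) ≤ δ - 1)
      rwa [Real.rpow_neg_one, show ((2:ℝ))⁻¹ = 1/2 by norm_num] at this
    calc t ^ (δ-1) / (2*δ) = (1/2) * t^(δ-1) / δ := by ring
      _ ≤ 2^(δ-1) * t^(δ-1) / δ := by
          have hpos : (0:ℝ) ≤ t ^ (δ-1) := Real.rpow_nonneg ht0.le _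
          gcongr
  refine le_trans hterm ?_
  simp only [Nop]
  exact le_iSup_of_le (2*t) (le_iSup_of_le (by linarith) (le_iSup_of_le ht0 le_rfl))

lemma nop_norm_lb :
    ENNReal.ofReal ((2*δ) ^ (-(p+1))) ≤ ∫⁻ x, (Nop (fn δ) x) ^ p * wgt ((1-δ)*(p-1)) x := by
  have hp0 : 0 < p := by linarith
  have h2δ : 0 < 2*δ := by linarith
  have key : ∀ t ∈ Set.Ioo (0:ℝ) (1/2),
      ENNReal.ofReal ((2*δ)^(-p) * t ^ (δ-1)) ≤ (Nop (fn δ) t) ^ p * wgt ((1-δ)*(p-1)) t := by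
    intro t ht
    have ht0 : 0 < t := ht.1
    have h1 := nop_lb hp hδ0 hδ1 ht
    have h2 : ENNReal.ofReal ((t ^ (δ-1)/(2*δ))^p * t ^ ((1-δ)*(p-1)))
        ≤ (Nop (fn δ) t) ^ p * wgt ((1-δ)*(p-1)) t := by
      rw [ENNReal.ofReal_mul (by positivity)]
      simp only [wgt, if_pos ht0]
      refine mul_le_mul' ?_ le_rfl
      rw [← ENNReal.ofReal_rpow_of_pos (by positivity)]
      exact ENNReal.rpow_le_rpow h1 hp0.le
    have heq : (t ^ (δ-1)/(2*δ))^p * t ^ ((1-δ)*(p-1)) = (2*δ)^(-p) * t^(δ-1) := by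
      rw [Real.div_rpow (Real.rpow_nonneg ht0.le _) h2δ.le, ← Real.rpow_mul ht0.le,
        div_eq_mul_inv, ← Real.rpow_neg h2δ.le, mul_assoc, mul_comm ((2*δ)^(-p)) _,
        ← mul_assoc, ← Real.rpow_add ht0, show (δ-1)*p + (1-δ)*(p-1) = δ-1 by ring,
        mul_comm]
    exact le_trans (le_of_eq (congrArg ENNReal.ofReal heq.symm)) h2
  calc ENNReal.ofReal ((2*δ) ^ (-(p+1)))
      ≤ ENNReal.ofReal ((2*δ)^(-p) * ((1/2:ℝ)^δ/δ)) := by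
        apply ENNReal.ofReal_le_ofReal
        have h12 : (1/2:ℝ) ≤ (1/2:ℝ)^δ := by
          have := Real.rpow_le_rpow_of_exponent_ge (by norm_num : (0:ℝ) < 1/2)
            (by norm_num : (1/2:ℝ) ≤ 1) hδ1.le
          rwa [Real.rpow_one] at this
        have heq2 : (2*δ) ^ (-(p+1)) = (2*δ)^(-p) * (2*δ)⁻¹ := by
          rw [← Real.rpow_neg_one (2*δ), ← Real.rpow_add h2δ]
          congr 1
          ring
        rw [heq2]
        have h3 : (2*δ)⁻¹ ≤ (1/2:ℝ)^δ/δ := by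
          rw [show (2*δ)⁻¹ = (1/2)/δ by rw [div_div, one_div]]
          gcongr
        exact mul_le_mul_of_nonneg_left h3 (Real.rpow_nonneg h2δ.le _)
      _ = ∫⁻ t in Set.Ioo (0:ℝ) (1/2), ENNReal.ofReal ((2*δ)^(-p) * t ^ (δ-1)) := by
        have : ∀ t ∈ Set.Ioo (0:ℝ) (1/2), ENNReal.ofReal ((2*δ)^(-p) * t ^ (δ-1))
            = ENNReal.ofReal ((2*δ)^(-p)) * ENNReal.ofReal (t ^ (δ-1)) := fun t ht =>
          ENNReal.ofReal_mul (by positivity)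
        rw [setLIntegral_congr_fun measurableSet_Ioo this,
          lintegral_const_mul' _ _ ENNReal.ofReal_ne_top,
          lint_rpow (by linarith : (-1:ℝ) < δ-1) (by norm_num : (0:ℝ) < 1/2),
          ← ENNReal.ofReal_mul (by positivity)]
        norm_num
      _ ≤ ∫⁻ t in Set.Ioo (0:ℝ) (1/2), (Nop (fn δ) t) ^ p * wgt ((1-δ)*(p-1)) t :=
        setLIntegral_mono' measurableSet_Ioo key
      _ ≤ ∫⁻ t, (Nop (fn δ) t) ^ p * wgt ((1-δ)*(p-1)) t :=
        setLIntegral_le_lintegral _ _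

omit hp hδ0 hδ1 in
lemma wgt_weight {α : ℝ} (hα : 0 ≤ α) : IsWeightR (wgt α) := by
  constructor
  · unfold wgt
    exact Measurable.ite measurableSet_Ioi (by measurability) measurable_const
  · intro r hr
    have hle : ∀ x ∈ Set.Ioo (-r) r, wgt α x ≤ ENNReal.ofReal (r ^ α) := by
      intro x hx
      simp only [wgt]
      split_ifs with h
      · exact ENNReal.ofReal_le_ofReal (Real.rpow_le_rpow h.le hx.2.le hα)
      · exact zero_le
    calc ∫⁻ x in Set.Ioo (-r) r, wgt α x
        ≤ ∫⁻ _ in Set.Ioo (-r) r, ENNReal.ofReal (r ^ α) :=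
          setLIntegral_mono' measurableSet_Ioo hle
      _ = ENNReal.ofReal (r ^ α) * volume (Set.Ioo (-r) r) := setLIntegral_const _ _
      _ < ∞ := by
          rw [Real.volume_Ioo]
          exact ENNReal.mul_lt_top ENNReal.ofReal_lt_top ENNReal.ofReal_lt_top

omit hp hδ0 hδ1 in
lemma fn_meas (δ' : ℝ) : Measurable (fn δ') := by
  unfold fn
  exact Measurable.ite measurableSet_Ioo (by measurability) measurable_const

end
end Aux18

/-- sharpness of the exponent `1/(p−1)` for the maximal operator `N`
over Calderón weights: if `‖Nf‖_{L^{p₀}(w)} ≤ c [w]_{A_{p₀,𝓑₀}}^β ‖f‖_{L^{p₀}(w)}`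
for every weight `w` on ℝ with `[w]_{A_{p₀,𝓑₀}} < ∞`, then `β ≥ 1/(p₀−1)`. -/
theorem statement18 (p₀ : ℝ) (hp₀ : 1 < p₀) (β : ℝ) (hβ : 0 ≤ β)
    (c : ℝ≥0∞) (hc0 : 0 < c) (hc : c < ∞)
    (hbound : ∀ w : ℝ → ℝ≥0∞, IsWeightR w → calderonApConst p₀ w < ∞ →
      ∀ f : ℝ → ℝ, Measurable f → wLpNormR p₀ w f < ∞ →
        wLpNormER p₀ w (Nop f) ≤ c * calderonApConst p₀ w ^ β * wLpNormR p₀ w f) :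
    1 / (p₀ - 1) ≤ β := by
  by_contra hlt
  push_neg at hlt
  have hp1 : (0:ℝ) < p₀ - 1 := by linarith
  have hp0 : (0:ℝ) < p₀ := by linarith
  have hC0 : 0 < c.toReal := ENNReal.toReal_pos hc0.ne' hc.ne
  set C := c.toReal with hCdef
  set E : ℝ := -(p₀+1) * (1/p₀) with hE
  set A : ℝ := 2 ^ E with hA
  have hA0 : 0 < A := Real.rpow_pos_of_pos two_pos E
  set e : ℝ := 1 + (1-p₀)*β with he
  have he0 : 0 < e := by
    have h1 : β * (p₀-1) < 1 := by
      have h2 := mul_lt_mul_of_pos_right hlt hp1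
      rwa [one_div, inv_mul_cancel₀ hp1.ne'] at h2
    rw [he]; nlinarith
  have key : ∀ δ : ℝ, 0 < δ → δ < 1 → A ≤ C * δ ^ e := by
    intro δ hδ0 hδ1
    have h2δ : (0:ℝ) < 2*δ := by linarith
    have hα : (0:ℝ) ≤ (1-δ)*(p₀-1) := by nlinarith
    have hw := wgt_weight hα
    have hAple := ap_le hp₀ hδ0 hδ1
    have hAp : calderonApConst p₀ (wgt ((1-δ)*(p₀-1))) < ∞ :=
      lt_of_le_of_lt hAple ENNReal.ofReal_lt_top
    have hfn := fn_norm hp₀ hδ0 hδ1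
    have hfnorm : wLpNormR p₀ (wgt ((1-δ)*(p₀-1))) (fn δ)
        = ENNReal.ofReal ((1/δ) ^ (1/p₀)) := by
      rw [wLpNormR, wLpNormER, hfn, ENNReal.ofReal_rpow_of_pos (by positivity)]
    have hb := hbound (wgt ((1-δ)*(p₀-1))) hw hAp (fn δ) (fn_meas δ)
      (by rw [hfnorm]; exact ENNReal.ofReal_lt_top)
    have hlow : ENNReal.ofReal ((2*δ) ^ (-(p₀+1) * (1/p₀)))
        ≤ wLpNormER p₀ (wgt ((1-δ)*(p₀-1))) (Nop (fn δ)) := by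
      rw [wLpNormER]
      calc ENNReal.ofReal ((2*δ) ^ (-(p₀+1) * (1/p₀)))
          = (ENNReal.ofReal ((2*δ) ^ (-(p₀+1)))) ^ (1/p₀) := by
            rw [ENNReal.ofReal_rpow_of_pos (Real.rpow_pos_of_pos h2δ _),
              ← Real.rpow_mul h2δ.le]
        _ ≤ (∫⁻ x, (Nop (fn δ) x) ^ p₀ * wgt ((1-δ)*(p₀-1)) x) ^ (1/p₀) :=
            ENNReal.rpow_le_rpow (nop_norm_lb hp₀ hδ0 hδ1) (by positivity)
    have hup : c * calderonApConst p₀ (wgt ((1-δ)*(p₀-1))) ^ β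
          * wLpNormR p₀ (wgt ((1-δ)*(p₀-1))) (fn δ)
        ≤ c * ENNReal.ofReal ((δ ^ (1-p₀)) ^ β * (1/δ) ^ (1/p₀)) := by
      rw [hfnorm, ENNReal.ofReal_mul (by positivity), ← mul_assoc]
      refine mul_le_mul' (mul_le_mul' le_rfl ?_) le_rfl
      calc calderonApConst p₀ (wgt ((1-δ)*(p₀-1))) ^ β
          ≤ (ENNReal.ofReal (δ ^ (1-p₀))) ^ β := ENNReal.rpow_le_rpow hAple hβ
        _ = ENNReal.ofReal ((δ ^ (1-p₀)) ^ β) :=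
            ENNReal.ofReal_rpow_of_pos (Real.rpow_pos_of_pos hδ0 _)
    have hchain := le_trans hlow (le_trans hb hup)
    have hfin : c * ENNReal.ofReal ((δ ^ (1-p₀)) ^ β * (1/δ) ^ (1/p₀)) ≠ ∞ :=
      ENNReal.mul_ne_top hc.ne ENNReal.ofReal_ne_top
    have hreal := ENNReal.toReal_mono hfin hchain
    rw [ENNReal.toReal_ofReal (Real.rpow_nonneg h2δ.le _), ENNReal.toReal_mul,
      ENNReal.toReal_ofReal (by positivity)] at hreal
    -- hreal : (2δ)^(-(p₀+1)*(1/p₀)) ≤ C * ((δ^(1-p₀))^β * (1/δ)^(1/p₀))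
    have hsplit : ((2:ℝ)*δ) ^ (-(p₀+1)*(1/p₀)) = A * δ ^ E := by
      rw [hA, hE, Real.mul_rpow (by norm_num) hδ0.le]
    have hrhs : ((δ:ℝ) ^ (1-p₀)) ^ β * (1/δ) ^ (1/p₀) = δ ^ ((1-p₀)*β - 1/p₀) := by
      rw [← Real.rpow_mul hδ0.le, one_div δ, Real.inv_rpow hδ0.le,
        ← Real.rpow_neg hδ0.le, ← Real.rpow_add hδ0]
      congr 1
    rw [hsplit, hrhs] at hreal
    have hmul := mul_le_mul_of_nonneg_right hreal (Real.rpow_nonneg hδ0.le (-E))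
    rw [mul_assoc, ← Real.rpow_add hδ0, add_neg_cancel, Real.rpow_zero, mul_one,
      mul_assoc, ← Real.rpow_add hδ0] at hmul
    have hexp : (1-p₀)*β - 1/p₀ + -E = e := by
      rw [hE, he]
      field_simp
      ring
    rwa [hexp] at hmul
  set δ := min (1/2) ((A/(2*C))^(1/e)) with hδdef
  have hx0 : (0:ℝ) < (A/(2*C))^(1/e) := Real.rpow_pos_of_pos (by positivity) _
  have hδ0 : 0 < δ := lt_min (by norm_num) hx0
  have hδ1 : δ < 1 := lt_of_le_of_lt (min_le_left _ _) (by norm_num)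
  have h1 := key δ hδ0 hδ1
  have h2 : δ ^ e ≤ A/(2*C) := by
    calc δ ^ e ≤ ((A/(2*C))^(1/e)) ^ e :=
          Real.rpow_le_rpow hδ0.le (min_le_right _ _) he0.le
      _ = A/(2*C) := by
          rw [← Real.rpow_mul (by positivity), one_div, inv_mul_cancel₀ he0.ne',
            Real.rpow_one]
  have h3 : A ≤ C * (A/(2*C)) := h1.trans (mul_le_mul_of_nonneg_left h2 hC0.le)
  have h4 : C * (A/(2*C)) = A/2 := by field_simp
  rw [h4] at h3
  linarith
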